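/- Fix natural numbers L, t ≥ 1, M, and e with 2·e < 2^M. Let A be the set of all binary strings of length L and let W be the set of all binary strings of length t containing exactly one true bit. For a function f : A → W define the finite set S(f) of binary strings consisting of all strings a ++ (t+M zeros) for a ∈ A, together with all strings a ++ f(a) ++ c for a ∈ A and c a binary string of length M. Suppose enc maps each function f : A → W to a binary string, and dec maps a pair of binary strings to a natural number, such that for every f : A → W and every binary string p that is a prefix of some element of S(f), the value dec(enc(f), p) differs from the number of elements of S(f) having p as a prefix by at most e. Then there exists f : A → W such that t^{2^L} ≤ 2^{|enc(f)| + 1} − 1; in particular some encoding has length at least 2^L · log₂ t − 1 bits. -/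

import Mathlib

/-- The set `S(f)` of the lower-bound construction: identifying binary strings
of length `L` with functions `Fin L → Bool`, it consists of the strings
`a ++ 0^{t+M}` for all `a` of length `L`, together with all strings
`a ++ f(a) ++ c` for `a` of length `L` and `c` of length `M`. -/
def approxCountSet (L t M : ℕ) (f : (Fin L → Bool) → List Bool) :
    Finset (List Bool) :=
  ((Finset.univ : Finset (Fin L → Bool)).image
      (fun a => List.ofFn a ++ List.replicate (t + M) false)) ∪
  ((Finset.univ : Finset ((Fin L → Bool) × (Fin M → Bool))).image
      (fun ac => List.ofFn ac.1 ++ f ac.1 ++ List.ofFn ac.2))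

/-- Bijective base-2 value of a binary string. -/
def bval : List Bool → ℕ
  | [] => 0
  | b :: l => (cond b 2 1) + 2 * bval l

lemma bval_le : ∀ l : List Bool, bval l ≤ 2 ^ (l.length + 1) - 2
  | [] => by simp [bval]
  | b :: l => by
    have ih := bval_le l
    have h2 : (1:ℕ) ≤ 2 ^ (l.length + 1) := Nat.one_le_two_pow
    simp only [bval, List.length_cons, pow_succ 2 (l.length + 1)]
    cases b <;> simp only [Bool.cond_true, Bool.cond_false] <;> omega

lemma bval_inj : ∀ l₁ l₂ : List Bool, bval l₁ = bval l₂ → l₁ = l₂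
  | [], [] => fun _ => rfl
  | [], b :: l => by cases b <;> (simp only [bval, cond]; omega)
  | b :: l, [] => by cases b <;> (simp only [bval, cond]; omega)
  | a :: l₁, b :: l₂ => by
    intro h
    simp only [bval] at h
    cases a <;> cases b <;> simp only [cond] at h
    · rw [bval_inj l₁ l₂ (by omega)]
    · omega
    · omega
    · rw [bval_inj l₁ l₂ (by omega)]

lemma card_le_of_bval_bound {α : Type*} [Fintype α] (G : α → List Bool)
    (hG : Function.Injective G) (N : ℕ) (hN : ∀ x, (G x).length ≤ N) :
    Fintype.card α ≤ 2 ^ (N + 1) - 1 := by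
  have hbound : ∀ x, bval (G x) < 2 ^ (N + 1) - 1 := by
    intro x
    have h1 := bval_le (G x)
    have h3 : (2:ℕ) ^ ((G x).length + 1) ≤ 2 ^ (N + 1) :=
      Nat.pow_le_pow_right (by omega) (by have := hN x; omega)
    have h4 : (1:ℕ) ≤ 2 ^ ((G x).length + 1) :=
      Nat.one_le_two_pow
    omega
  have hinj : Function.Injective
      (fun x => (⟨bval (G x), hbound x⟩ : Fin (2 ^ (N + 1) - 1))) := by
    intro x y h
    exact hG (bval_inj _ _ (congrArg Fin.val h))
  calc Fintype.card α ≤ Fintype.card (Fin (2 ^ (N + 1) - 1)) :=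
        Fintype.card_le_of_injective _ hinj
    _ = 2 ^ (N + 1) - 1 := Fintype.card_fin _

lemma prefix_append_left_iff {q u v : List Bool} (h : q.length ≤ u.length) :
    q <+: u ++ v ↔ q <+: u := by
  rw [List.prefix_iff_eq_take, List.prefix_iff_eq_take,
    List.take_append_of_le_length h]

lemma append_prefix_append {x y u v : List Bool} (h : x.length = y.length) :
    x ++ u <+: y ++ v ↔ x = y ∧ u <+: v := by
  constructor
  · rintro ⟨w, hw⟩
    rw [List.append_assoc] at hw
    obtain ⟨hxy, huv⟩ := List.append_inj hw h
    exact ⟨hxy, ⟨w, huv⟩⟩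
  · rintro ⟨rfl, w, hw⟩
    exact ⟨w, by rw [List.append_assoc, hw]⟩

lemma repl_prefix : ∀ (m : ℕ) (l : List Bool), m ≤ l.length →
    (List.replicate m false <+: l ↔ m ≤ List.idxOf true l)
  | 0, l, _ => by simp
  | m + 1, [], h => by simp at h
  | m + 1, b :: l, h => by
    cases b
    · rw [List.replicate_succ, List.cons_prefix_cons,
        List.idxOf_cons_ne _ (by simp)]
      simp only [List.length_cons] at h
      have := repl_prefix m l (by omega)
      simp only [true_and, this]
      omega
    · rw [List.replicate_succ, List.cons_prefix_cons, List.idxOf_cons_self]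
      simp

lemma weight_one_eq (l : List Bool) (h : l.count true = 1) :
    l = List.replicate (List.idxOf true l) false ++
      true :: List.replicate (l.length - List.idxOf true l - 1) false := by
  induction l with
  | nil => simp at h
  | cons b l ih =>
    cases b
    · rw [List.count_cons] at h
      simp only [List.idxOf_cons_ne _ (by simp : false ≠ true)]
      have h2 := ih (by simpa using h)
      rw [Nat.succ_eq_add_one, List.replicate_succ, List.cons_append,
        List.length_cons]
      congr 1
      convert h2 using 4
      omega
    · rw [List.count_cons] at h
      simp only [List.idxOf_cons_self, List.replicate_zero, List.nil_append,
        List.length_cons]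
      have hl : l.count true = 0 := by simpa using h
      have h3 : l = List.replicate l.length false := by
        apply List.eq_replicate_of_mem
        intro b hb
        cases b
        · rfl
        · exact absurd (List.count_pos_iff.2 hb) (by omega)
      simpa using congrArg (List.cons true) h3

lemma indexOf_repl_true (i r : ℕ) :
    List.idxOf true (List.replicate i false ++ true :: List.replicate r false) = i := by
  induction i with
  | zero => simp
  | succ i ih =>
    rw [List.replicate_succ, List.cons_append, List.idxOf_cons_ne _ (by simp), ih]

lemma indexOf_lt_of_weight_one {l : List Bool} (h : l.count true = 1) :
    List.idxOf true l < l.length :=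
  List.idxOf_lt_length_iff.2 (List.count_pos_iff.1 (by omega))

lemma count_query (L t M : ℕ) (f : (Fin L → Bool) → List Bool)
    (hf : ∀ a, (f a).length = t ∧ (f a).count true = 1)
    (a : Fin L → Bool) (m : ℕ) (hm : m ≤ t) :
    ((approxCountSet L t M f).filter
        (fun s => (List.ofFn a ++ List.replicate m false) <+: s)).card
      = 1 + if m ≤ List.idxOf true (f a) then 2 ^ M else 0 := by
  classical
  set p := List.ofFn a ++ List.replicate m false with hp
  rw [approxCountSet, Finset.filter_union]
  -- disjointness of the two filtered parts
  have hdisj : Disjoint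
      (((Finset.univ : Finset (Fin L → Bool)).image
        (fun a => List.ofFn a ++ List.replicate (t + M) false)).filter (fun s => p <+: s))
      (((Finset.univ : Finset ((Fin L → Bool) × (Fin M → Bool))).image
        (fun ac => List.ofFn ac.1 ++ f ac.1 ++ List.ofFn ac.2)).filter (fun s => p <+: s)) := by
    rw [Finset.disjoint_left]
    intro s hs1 hs2
    simp only [Finset.mem_filter, Finset.mem_image, Finset.mem_univ, true_and] at hs1 hs2
    obtain ⟨⟨a1, ha1⟩, -⟩ := hs1
    obtain ⟨⟨ac, hac⟩, -⟩ := hs2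
    rw [← ha1, List.append_assoc] at hac
    obtain ⟨-, h2⟩ := List.append_inj hac (by simp)
    have h5 : List.take t (f ac.1 ++ List.ofFn ac.2)
        = List.take t (List.replicate (t + M) false) := by rw [h2]
    rw [List.take_append_of_le_length (le_of_eq (hf ac.1).1.symm),
      List.take_replicate] at h5
    have h6 : t ⊓ (t + M) = t := by omega
    rw [h6, ← (hf ac.1).1, List.take_length] at h5
    have hc := (hf ac.1).2
    rw [h5] at hc
    simp [List.count_replicate] at hc
  rw [Finset.card_union_of_disjoint hdisj]
  -- part 1
  have hinj1 : Function.Injective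
      (fun a : Fin L → Bool => List.ofFn a ++ List.replicate (t + M) false) := by
    intro x y hxy
    exact List.ofFn_injective (List.append_inj hxy (by simp)).1
  have hpart1 : (((Finset.univ : Finset (Fin L → Bool)).image
      (fun a => List.ofFn a ++ List.replicate (t + M) false)).filter
        (fun s => p <+: s)).card = 1 := by
    rw [Finset.filter_image, Finset.card_image_of_injective _ hinj1]
    have : (Finset.univ.filter
        (fun a' : Fin L → Bool => p <+: List.ofFn a' ++ List.replicate (t + M) false))
        = {a} := by
      ext a'
      simp only [Finset.mem_filter, Finset.mem_univ, true_and, Finset.mem_singleton, hp]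
      rw [append_prefix_append (by simp)]
      constructor
      · rintro ⟨h1, -⟩
        exact (List.ofFn_injective h1).symm
      · rintro rfl
        refine ⟨rfl, ?_⟩
        rw [List.prefix_iff_eq_take, List.take_replicate, List.length_replicate,
          min_eq_left (by omega)]
    rw [this, Finset.card_singleton]
  rw [hpart1]
  -- part 2
  have hinj2 : Function.Injective
      (fun ac : (Fin L → Bool) × (Fin M → Bool) =>
        List.ofFn ac.1 ++ f ac.1 ++ List.ofFn ac.2) := by
    rintro ⟨x, c⟩ ⟨y, d⟩ hxy
    simp only [List.append_assoc] at hxy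
    obtain ⟨h1, h2⟩ := List.append_inj hxy (by simp)
    have hx : x = y := List.ofFn_injective h1
    subst hx
    obtain ⟨-, h3⟩ := List.append_inj h2 rfl
    exact congrArg (Prod.mk x) (List.ofFn_injective h3)
  rw [Finset.filter_image, Finset.card_image_of_injective _ hinj2]
  have hmem : ∀ ac : (Fin L → Bool) × (Fin M → Bool),
      (p <+: List.ofFn ac.1 ++ f ac.1 ++ List.ofFn ac.2) ↔
        (ac.1 = a ∧ m ≤ List.idxOf true (f a)) := by
    rintro ⟨x, c⟩
    simp only [hp, List.append_assoc]
    rw [append_prefix_append (by simp)]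
    constructor
    · rintro ⟨h1, h2⟩
      have hx : x = a := (List.ofFn_injective h1).symm
      subst hx
      rw [prefix_append_left_iff (by simp [(hf x).1, hm])] at h2
      exact ⟨rfl, (repl_prefix m (f x) (by rw [(hf x).1]; exact hm)).1 h2⟩
    · rintro ⟨rfl, h2⟩
      refine ⟨rfl, ?_⟩
      rw [prefix_append_left_iff (by simp [(hf x).1, hm])]
      exact (repl_prefix m (f x) (by rw [(hf x).1]; exact hm)).2 h2
  by_cases hcase : m ≤ List.idxOf true (f a)
  · rw [if_pos hcase]
    have : (Finset.univ.filter
        (fun ac : (Fin L → Bool) × (Fin M → Bool) =>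
          p <+: List.ofFn ac.1 ++ f ac.1 ++ List.ofFn ac.2))
        = {a} ×ˢ Finset.univ := by
      ext ac
      simp only [Finset.mem_filter, Finset.mem_univ, true_and, Finset.mem_product,
        Finset.mem_singleton, hmem ac, and_true, hcase]
    rw [this, Finset.card_product, Finset.card_singleton, Finset.card_univ, one_mul]
    simp [Fintype.card_fun]
  · rw [if_neg hcase]
    have : (Finset.univ.filter
        (fun ac : (Fin L → Bool) × (Fin M → Bool) =>
          p <+: List.ofFn ac.1 ++ f ac.1 ++ List.ofFn ac.2)) = ∅ := by
      ext ac
      simp only [Finset.mem_filter, Finset.mem_univ, true_and, Finset.notMem_empty,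
        iff_false, hmem ac]
      tauto
    rw [this, Finset.card_empty]

theorem approx_prefix_count_space_lower_bound
    (L t M e : ℕ) (ht : 1 ≤ t) (he : 2 * e < 2 ^ M)
    (enc : ((Fin L → Bool) → List Bool) → List Bool)
    (dec : List Bool → List Bool → ℕ)
    (hdec : ∀ f : (Fin L → Bool) → List Bool,
      (∀ a, (f a).length = t ∧ (f a).count true = 1) →
      ∀ p : List Bool, (∃ s ∈ approxCountSet L t M f, p <+: s) →
        ((dec (enc f) p : ℤ) -
          (((approxCountSet L t M f).filter (fun s => p <+: s)).card : ℤ)).natAbs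
          ≤ e) :
    ∃ f : (Fin L → Bool) → List Bool,
      (∀ a, (f a).length = t ∧ (f a).count true = 1) ∧
      t ^ (2 ^ L) ≤ 2 ^ ((enc f).length + 1) - 1 := by
  classical
  -- the canonical valid functions
  set F : ((Fin L → Bool) → Fin t) → ((Fin L → Bool) → List Bool) :=
    fun j a => List.replicate (j a) false ++ true ::
      List.replicate (t - (j a) - 1) false with hF
  have hvalid : ∀ j, ∀ a, ((F j a).length = t ∧ (F j a).count true = 1) := by
    intro j a
    constructor
    · simp only [hF, List.length_append, List.length_replicate, List.length_cons]
      have := (j a).2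
      omega
    · simp [hF, List.count_append, List.count_cons, List.count_replicate]
  have hidx : ∀ j a, List.idxOf true (F j a) = (j a : ℕ) := fun j a =>
    indexOf_repl_true _ _
  -- key distinguishing claim
  have key : ∀ f g : (Fin L → Bool) → List Bool,
      (∀ a, (f a).length = t ∧ (f a).count true = 1) →
      (∀ a, (g a).length = t ∧ (g a).count true = 1) →
      enc f = enc g → ∀ a,
      ¬ (List.idxOf true (f a) < List.idxOf true (g a)) := by
    intro f g hf hg henc a hlt
    set i := List.idxOf true (f a) with hi
    have hit : i < t := by rw [hi, ← (hf a).1]; exact indexOf_lt_of_weight_one (hf a).2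
    set p := List.ofFn a ++ List.replicate (i + 1) false with hp
    have hvalidq : ∀ h : (Fin L → Bool) → List Bool,
        ∃ s ∈ approxCountSet L t M h, p <+: s := by
      intro h
      refine ⟨List.ofFn a ++ List.replicate (t + M) false, ?_, ?_⟩
      · rw [approxCountSet, Finset.mem_union]
        exact Or.inl (Finset.mem_image_of_mem _ (Finset.mem_univ a))
      · rw [hp, append_prefix_append (by simp), List.prefix_iff_eq_take,
          List.take_replicate, List.length_replicate, min_eq_left (by omega)]
        exact ⟨rfl, rfl⟩
    have hcf := count_query L t M f hf a (i + 1) (by omega)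
    have hcg := count_query L t M g hg a (i + 1) (by omega)
    rw [if_neg (by omega)] at hcf
    rw [if_pos (by omega)] at hcg
    have hdf := hdec f hf p (hvalidq f)
    have hdg := hdec g hg p (hvalidq g)
    rw [← hp] at hcf hcg
    rw [hcf] at hdf
    rw [hcg, ← henc] at hdg
    have hM : 2 * e < 2 ^ M := he
    omega
  -- enc is injective on F
  have hGinj : Function.Injective (fun j => enc (F j)) := by
    intro j j' hjj
    funext a
    ext
    by_contra hne
    have hne' : List.idxOf true (F j a) ≠ List.idxOf true (F j' a) := by
      rw [hidx, hidx]; exact hne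
    rcases Nat.lt_or_ge (List.idxOf true (F j a)) (List.idxOf true (F j' a)) with h | h
    · exact key (F j) (F j') (hvalid j) (hvalid j') hjj a h
    · exact key (F j') (F j) (hvalid j') (hvalid j) hjj.symm a (by omega)
  -- pick j with maximal encoding length
  obtain ⟨j₀, -, hj₀⟩ := Finset.exists_max_image (Finset.univ : Finset ((Fin L → Bool) → Fin t))
    (fun j => (enc (F j)).length) ⟨fun _ => ⟨0, ht⟩, Finset.mem_univ _⟩
  refine ⟨F j₀, hvalid j₀, ?_⟩
  have hcard : Fintype.card ((Fin L → Bool) → Fin t)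
      ≤ 2 ^ ((enc (F j₀)).length + 1) - 1 :=
    card_le_of_bval_bound (fun j => enc (F j)) hGinj _
      (fun j => hj₀ j (Finset.mem_univ j))

  rwa [Fintype.card_fun, Fintype.card_fin, Fintype.card_fun, Fintype.card_fin,
    Fintype.card_bool] at hcard
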